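/- In ℚ⟦s⟧ let g := Σ_{k≥1} ((3k)!/((k!)³ · k)) s^k and f := −s · exp(g), so f has constant coefficient 0 and linear coefficient −1, and hence possesses a unique compositional inverse f⁻¹ ∈ ℚ⟦Q⟧ (with f(f⁻¹(Q)) = Q and f⁻¹(f(s)) = s). Then there is a unique power series c ∈ ℚ⟦Q⟧ with constant coefficient 1 such that f⁻¹(Q) · c(Q)³ = −Q, and its initial coefficients are c = 1 − 2Q + 5Q² − 32Q³ + O(Q⁴). -/

import Mathlib

open PowerSeries Finset

/-- Composition `g ∘ f` of formal power series (valid when `f` has zero constant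
coefficient, in which case `coeff n (f^k) = 0` for `k > n` and the sum below is the
full sum `Σ_k (coeff k g)·fᵏ`). -/
noncomputable def pscomp (g f : PowerSeries ℚ) : PowerSeries ℚ :=
  PowerSeries.mk fun n =>
    ∑ k ∈ Finset.range (n + 1), (PowerSeries.coeff k g) * (PowerSeries.coeff n (f ^ k))

/-- `g := Σ_{k≥1} ((3k)!/((k!)³·k)) sᵏ ∈ ℚ⟦s⟧`. -/
noncomputable def gser : PowerSeries ℚ :=
  PowerSeries.mk fun k =>
    if k = 0 then 0 else ((3 * k).factorial : ℚ) / ((k.factorial : ℚ) ^ 3 * k)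

/-- `f := −s·exp(g(s)) ∈ ℚ⟦s⟧`, the exponentiated local mirror map of `K_{ℙ²}`. -/
noncomputable def fser : PowerSeries ℚ :=
  -(PowerSeries.X * pscomp (PowerSeries.exp ℚ) gser)

lemma coeff_pscomp (g f : PowerSeries ℚ) (n : ℕ) :
    coeff n (pscomp g f) = ∑ k ∈ range (n+1), coeff k g * coeff n (f ^ k) := by
  simp [pscomp]

lemma coeff_pow_eq_zero {f : PowerSeries ℚ} (hf : constantCoeff f = 0)
    {n k : ℕ} (h : n < k) : coeff n (f ^ k) = 0 := by
  obtain ⟨t, ht⟩ : (X : PowerSeries ℚ)^k ∣ f^k := pow_dvd_pow_of_dvd (X_dvd_iff.mpr hf) k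
  rw [ht, coeff_X_pow_mul']
  simp [Nat.not_le.mpr h]

/-- extension of the composition sum to larger range -/
lemma coeff_pscomp' {f : PowerSeries ℚ} (hf : constantCoeff f = 0) (g : PowerSeries ℚ)
    {n N : ℕ} (hN : n < N) :
    coeff n (pscomp g f) = ∑ k ∈ range N, coeff k g * coeff n (f ^ k) := by
  rw [coeff_pscomp]
  refine Finset.sum_subset (by simp; omega) fun k hk hk' => ?_
  simp only [mem_range] at hk hk'
  rw [coeff_pow_eq_zero hf (by omega), mul_zero]

/-- coeff of aeval of a polynomial -/
lemma coeff_aeval {f : PowerSeries ℚ} (hf : constantCoeff f = 0) (P : Polynomial ℚ) (n : ℕ) :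
    coeff n (Polynomial.aeval f P) = ∑ k ∈ range (n+1), P.coeff k * coeff n (f ^ k) := by
  rw [Polynomial.aeval_eq_sum_range' (n := max (n+1) (P.natDegree + 1)) (by omega), map_sum]
  rw [show (∑ k ∈ range (n+1), P.coeff k * coeff n (f ^ k)) =
      ∑ k ∈ range (max (n+1) (P.natDegree+1)), P.coeff k * coeff n (f ^ k) from
    Finset.sum_subset (by simp) fun k hk hk' => by
      simp only [mem_range] at hk hk'
      rw [coeff_pow_eq_zero hf (by omega), mul_zero]]
  refine Finset.sum_congr rfl fun k _ => ?_
  rw [map_smul, smul_eq_mul]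
variable {f g a b : PowerSeries ℚ}

lemma pscomp_eq_aeval (hf : constantCoeff f = 0) (g : PowerSeries ℚ) {n N : ℕ} (hN : n < N) :
    coeff n (pscomp g f) = coeff n (Polynomial.aeval f (trunc N g)) := by
  rw [coeff_aeval hf, coeff_pscomp]
  refine Finset.sum_congr rfl fun k hk => ?_
  rw [coeff_trunc, if_pos (by simp at hk; omega)]

lemma pscomp_mul (hf : constantCoeff f = 0) (a b : PowerSeries ℚ) :
    pscomp (a * b) f = pscomp a f * pscomp b f := by
  ext n
  rw [pscomp_eq_aeval hf _ (lt_add_one n)]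
  have htr : coeff n (Polynomial.aeval f (trunc (n+1) (a*b)))
      = coeff n (Polynomial.aeval f (trunc (n+1) a * trunc (n+1) b)) := by
    rw [coeff_aeval hf, coeff_aeval hf]
    refine Finset.sum_congr rfl fun k hk => ?_
    simp only [mem_range] at hk
    congr 1
    rw [coeff_trunc, if_pos (by omega), Polynomial.coeff_mul, PowerSeries.coeff_mul]
    refine Finset.sum_congr rfl fun p hp => ?_
    rw [Finset.HasAntidiagonal.mem_antidiagonal] at hp
    rw [coeff_trunc, coeff_trunc, if_pos (by omega), if_pos (by omega)]
  rw [htr, map_mul, PowerSeries.coeff_mul, PowerSeries.coeff_mul]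
  refine Finset.sum_congr rfl fun p hp => ?_
  rw [Finset.HasAntidiagonal.mem_antidiagonal] at hp
  rw [← pscomp_eq_aeval hf a (show p.1 < n+1 by omega),
      ← pscomp_eq_aeval hf b (show p.2 < n+1 by omega)]

lemma pscomp_one (f : PowerSeries ℚ) : pscomp 1 f = 1 := by
  ext n
  rw [coeff_pscomp, Finset.sum_eq_single 0]
  · simp
  · intro k _ hk
    rw [coeff_one, if_neg hk, zero_mul]
  · simp
lemma pscomp_pow (hf : constantCoeff f = 0) (a : PowerSeries ℚ) (k : ℕ) :
    pscomp (a ^ k) f = (pscomp a f) ^ k := by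
  induction k with
  | zero => simpa using pscomp_one f
  | succ k ih => rw [pow_succ, pow_succ, pscomp_mul hf, ih]

lemma pscomp_X_left (hf : constantCoeff f = 0) : pscomp X f = f := by
  ext n
  rw [coeff_pscomp' hf X (show n < n+2 by omega), Finset.sum_eq_single 1]
  · simp
  · intro k _ hk
    rw [coeff_X, if_neg hk, zero_mul]
  · intro h
    exact absurd (by simp : (1:ℕ) ∈ range (n+2)) h
lemma pscomp_X_right (g : PowerSeries ℚ) : pscomp g X = g := by
  ext n
  rw [coeff_pscomp, Finset.sum_eq_single n]
  · simp [coeff_X_pow]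
  · intro k hk hk'
    rw [coeff_X_pow, if_neg (by omega), mul_zero]
  · simp
lemma constantCoeff_pscomp (hg : constantCoeff g = 0) (f : PowerSeries ℚ) :
    constantCoeff (pscomp g f) = 0 := by
  rw [← coeff_zero_eq_constantCoeff_apply, coeff_pscomp]
  simp [coeff_zero_eq_constantCoeff_apply, hg]

lemma pscomp_assoc (h : PowerSeries ℚ) (hg : constantCoeff g = 0)
    (hf : constantCoeff f = 0) :
    pscomp (pscomp h g) f = pscomp h (pscomp g f) := by
  ext n
  rw [coeff_pscomp, coeff_pscomp]
  have hgf : constantCoeff (pscomp g f) = 0 := constantCoeff_pscomp hg f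
  calc ∑ k ∈ range (n+1), coeff k (pscomp h g) * coeff n (f ^ k)
      = ∑ k ∈ range (n+1), (∑ j ∈ range (n+1), coeff j h * coeff k (g ^ j)) * coeff n (f ^ k) := by
        refine Finset.sum_congr rfl fun k hk => ?_
        rw [coeff_pscomp' hg h (show k < n+1 by simpa using hk)]
    _ = ∑ j ∈ range (n+1), coeff j h * ∑ k ∈ range (n+1), coeff k (g ^ j) * coeff n (f ^ k) := by
        simp_rw [Finset.sum_mul, Finset.mul_sum, mul_assoc]
        exact Finset.sum_comm
    _ = ∑ j ∈ range (n+1), coeff j h * coeff n ((pscomp g f) ^ j) := by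
        refine Finset.sum_congr rfl fun j _ => ?_
        rw [← pscomp_pow hf, coeff_pscomp]
variable {a b : PowerSeries ℚ}

/-- T1: powers agree below n if coefficients agree below n -/
lemma pow_agree_below {n : ℕ} (h : ∀ j < n, coeff j a = coeff j b) (k : ℕ) :
    ∀ m < n, coeff m (a ^ k) = coeff m (b ^ k) := by
  induction k with
  | zero => intro m _; rfl
  | succ k ih =>
    intro m hm
    rw [pow_succ, pow_succ, PowerSeries.coeff_mul, PowerSeries.coeff_mul]
    refine Finset.sum_congr rfl fun p hp => ?_
    rw [Finset.HasAntidiagonal.mem_antidiagonal] at hp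
    rw [ih p.1 (by omega), h p.2 (by omega)]

/-- T2: n-th coefficients of k-th powers (k ≥ 2) agree if coefficients agree below n -/
lemma pow_agree_at (ha : constantCoeff a = 0) (hb : constantCoeff b = 0)
    {n : ℕ} (h : ∀ j < n, coeff j a = coeff j b) {k : ℕ} (hk : 2 ≤ k) :
    coeff n (a ^ k) = coeff n (b ^ k) := by
  obtain ⟨l, rfl⟩ : ∃ l, k = l + 1 := ⟨k - 1, by omega⟩
  rw [pow_succ, pow_succ, PowerSeries.coeff_mul, PowerSeries.coeff_mul]
  refine Finset.sum_congr rfl fun p hp => ?_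
  rw [Finset.HasAntidiagonal.mem_antidiagonal] at hp
  rcases Nat.eq_zero_or_pos p.2 with h2 | h2
  · rw [h2, coeff_zero_eq_constantCoeff_apply, coeff_zero_eq_constantCoeff_apply, ha, hb]
    simp
  · rcases Nat.eq_zero_or_pos p.1 with h1 | h1
    · have hl : 1 ≤ l := by omega
      have : ∀ c : PowerSeries ℚ, constantCoeff c = 0 → coeff 0 (c ^ l) = 0 := by
        intro c hc
        rw [coeff_zero_eq_constantCoeff_apply, map_pow, hc, zero_pow (by omega)]
      rw [h1, this a ha, this b hb, zero_mul, zero_mul]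
    · rw [pow_agree_below h l p.1 (by omega), h p.2 (by omega)]
noncomputable def solveCoeff (f t : PowerSeries ℚ) : ℕ → ℚ
  | 0 => 0
  | (n+1) =>
    (coeff 1 f)⁻¹ * (coeff (n+1) t -
      ∑ k ∈ Finset.Ico 2 (n+2), coeff k f *
        coeff (n+1) ((PowerSeries.mk fun j => if h : j < n+1 then solveCoeff f t j else 0) ^ k))

noncomputable def solveSer (f t : PowerSeries ℚ) : PowerSeries ℚ :=
  PowerSeries.mk (solveCoeff f t)

lemma constantCoeff_solveSer : constantCoeff (solveSer f t) = 0 := by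
  rw [← coeff_zero_eq_constantCoeff_apply, solveSer, coeff_mk, solveCoeff]

/-- split the composition sum -/
lemma pscomp_coeff_split (f d : PowerSeries ℚ) (n : ℕ) :
    coeff (n+1) (pscomp f d) = coeff 1 f * coeff (n+1) d +
      ∑ k ∈ Finset.Ico 2 (n+2), coeff k f * coeff (n+1) (d ^ k) := by
  rw [coeff_pscomp, Finset.range_eq_Ico,
    Finset.sum_eq_sum_Ico_succ_bot (by omega : 0 < n+2),
    Finset.sum_eq_sum_Ico_succ_bot (by omega : 1 < n+2)]
  simp [pow_one]

lemma solve_spec (hf0 : constantCoeff f = 0) (hf1 : coeff 1 f ≠ 0) (ht : constantCoeff t = 0) :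
    pscomp f (solveSer f t) = t := by
  ext n
  cases n with
  | zero =>
    rw [coeff_pscomp]
    simp [coeff_zero_eq_constantCoeff_apply, constantCoeff_solveSer, ht, hf0]
  | succ n =>
    rw [pscomp_coeff_split]
    set T := (PowerSeries.mk fun j => if h : j < n+1 then solveCoeff f t j else 0) with hT
    have hag : ∀ j < n+1, coeff j T = coeff j (solveSer f t) := by
      intro j hj
      rw [hT, coeff_mk, dif_pos hj, solveSer, coeff_mk]
    have hT0 : constantCoeff T = 0 := by
      rw [← coeff_zero_eq_constantCoeff_apply, hag 0 (by omega),
        coeff_zero_eq_constantCoeff_apply, constantCoeff_solveSer]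
    have hpow : ∀ k ∈ Finset.Ico 2 (n+2),
        coeff k f * coeff (n+1) ((solveSer f t) ^ k)
        = coeff k f * coeff (n+1) (T ^ k) := by
      intro k hk
      simp only [Finset.mem_Ico] at hk
      rw [pow_agree_at constantCoeff_solveSer hT0 (fun j hj => (hag j hj).symm) hk.1]
    rw [Finset.sum_congr rfl hpow]
    have : coeff (n+1) (solveSer f t) = (coeff 1 f)⁻¹ * (coeff (n+1) t -
        ∑ k ∈ Finset.Ico 2 (n+2), coeff k f * coeff (n+1) (T ^ k)) := by
      rw [solveSer, coeff_mk, solveCoeff, hT]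
    rw [this]
    field_simp
    ring

lemma solve_unique (hf1 : coeff 1 f ≠ 0) {d e : PowerSeries ℚ}
    (hd0 : constantCoeff d = 0) (he0 : constantCoeff e = 0)
    (hde : pscomp f d = pscomp f e) : d = e := by
  have key : ∀ n, coeff n d = coeff n e := by
    intro n
    induction n using Nat.strong_induction_on with
    | _ n ih =>
      cases n with
      | zero => rw [coeff_zero_eq_constantCoeff_apply, coeff_zero_eq_constantCoeff_apply, hd0, he0]
      | succ n =>
        have h1 := congrArg (coeff (n+1)) hde
        rw [pscomp_coeff_split, pscomp_coeff_split] at h1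
        have h2 : ∀ k ∈ Finset.Ico 2 (n+2),
            coeff k f * coeff (n+1) (d ^ k) = coeff k f * coeff (n+1) (e ^ k) := by
          intro k hk
          simp only [Finset.mem_Ico] at hk
          rw [pow_agree_at hd0 he0 (fun j hj => ih j hj) hk.1]
        rw [Finset.sum_congr rfl h2] at h1
        have h3 : coeff 1 f * coeff (n+1) d = coeff 1 f * coeff (n+1) e := by
          linarith [h1]
        exact mul_left_cancel₀ hf1 h3
  exact PowerSeries.ext key


lemma pscomp_add (a b f : PowerSeries ℚ) : pscomp (a + b) f = pscomp a f + pscomp b f := by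
  ext n
  rw [map_add, coeff_pscomp, coeff_pscomp, coeff_pscomp, ← Finset.sum_add_distrib]
  refine Finset.sum_congr rfl fun k _ => ?_
  rw [map_add, add_mul]

lemma pscomp_sub (a b f : PowerSeries ℚ) : pscomp (a - b) f = pscomp a f - pscomp b f := by
  ext n
  rw [map_sub, coeff_pscomp, coeff_pscomp, coeff_pscomp, ← Finset.sum_sub_distrib]
  refine Finset.sum_congr rfl fun k _ => ?_
  rw [map_sub, sub_mul]

/-- compositional inverse: existence and uniqueness -/
theorem comp_inv_exists_unique (hf0 : constantCoeff f = 0) (hf1 : coeff 1 f ≠ 0) :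
    ∃! fi : PowerSeries ℚ, constantCoeff fi = 0 ∧
      pscomp f fi = X ∧ pscomp fi f = X := by
  have hX0 : constantCoeff (X : PowerSeries ℚ) = 0 := constantCoeff_X
  set d := solveSer f X with hd
  have hd0 : constantCoeff d = 0 := constantCoeff_solveSer
  have hR : pscomp f d = X := solve_spec hf0 hf1 hX0
  have hd1 : coeff 1 f * coeff 1 d = 1 := by
    have h := congrArg (coeff 1) hR
    rw [pscomp_coeff_split f d 0] at h
    simpa using h
  have hd1' : coeff 1 d ≠ 0 := fun h => by simp [h] at hd1
  set e := solveSer d X with he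
  have he0 : constantCoeff e = 0 := constantCoeff_solveSer
  have hRe : pscomp d e = X := solve_spec hd0 hd1' hX0
  have hfe : f = e := by
    have h1 : pscomp f (pscomp d e) = f := by rw [hRe, pscomp_X_right]
    have h2 : pscomp f (pscomp d e) = e := by
      rw [← pscomp_assoc f hd0 he0, hR, pscomp_X_left he0]
    rw [← h1, h2]
  have hL : pscomp d f = X := by rw [hfe, hRe]
  refine ⟨d, ⟨hd0, hR, hL⟩, ?_⟩
  rintro y ⟨hy0, hy1, _⟩
  exact solve_unique hf1 hy0 hd0 (by rw [hy1, hR])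

/-- unique cube root with constant coefficient 1 -/
theorem cube_root_exists_unique (r : PowerSeries ℚ) (hr : constantCoeff r = 1) :
    ∃! c : PowerSeries ℚ, constantCoeff c = 1 ∧ c ^ 3 = r := by
  set P : PowerSeries ℚ := (1 + X) ^ 3 - 1 with hP
  have hP0 : constantCoeff P = 0 := by simp [hP]
  have hP1 : coeff 1 P = 3 := by
    have h3 : P = (3 : ℚ⟦X⟧) * X + 3 * X ^ 2 + X ^ 3 := by rw [hP]; ring
    have h4 : (3 : ℚ⟦X⟧) = C 3 := (map_ofNat (C) 3).symm
    rw [h3, h4, map_add, map_add, coeff_C_mul, coeff_C_mul, coeff_X, coeff_X_pow, coeff_X_pow]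
    norm_num
  have hP1' : coeff 1 P ≠ 0 := by rw [hP1]; norm_num
  have hpscompP : ∀ u : PowerSeries ℚ, constantCoeff u = 0 →
      pscomp P u = (1 + u) ^ 3 - 1 := by
    intro u hu
    rw [hP, pscomp_sub, pscomp_pow hu, pscomp_add, pscomp_one, pscomp_X_left hu]
  have ht0 : constantCoeff (r - 1) = 0 := by rw [map_sub, hr, map_one, sub_self]
  set d := solveSer P (r - 1) with hdd
  have hd0 : constantCoeff d = 0 := constantCoeff_solveSer
  have hd : pscomp P d = r - 1 := solve_spec hP0 hP1' ht0
  refine ⟨1 + d, ⟨by rw [map_add, map_one, hd0, add_zero], ?_⟩, ?_⟩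
  · have := (hpscompP d hd0).symm.trans hd
    linear_combination this
  · rintro y ⟨hy0, hy3⟩
    have hy0' : constantCoeff (y - 1) = 0 := by rw [map_sub, hy0, map_one, sub_self]
    have hyd : pscomp P (y - 1) = r - 1 := by
      rw [hpscompP _ hy0']
      have : 1 + (y - 1) = y := by ring
      rw [this, hy3]
    have := solve_unique hP1' hy0' hd0 (by rw [hyd, hd])
    linear_combination this

lemma coeff_mul_range (a b : PowerSeries ℚ) (n : ℕ) :
    coeff n (a * b) = ∑ k ∈ range (n+1), coeff k a * coeff (n-k) b := by
  rw [PowerSeries.coeff_mul, Finset.Nat.sum_antidiagonal_eq_sum_range_succ_mk]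

section powlemmas
variable {a : PowerSeries ℚ} (h0 : coeff 0 a = 0)
include h0

lemma p2_0 : coeff 0 (a^2) = 0 := by
  rw [pow_two, coeff_mul_range]; simp [Finset.sum_range_succ, h0]
lemma p2_1 : coeff 1 (a^2) = 0 := by
  rw [pow_two, coeff_mul_range]; simp [Finset.sum_range_succ, h0]
lemma p2_2 : coeff 2 (a^2) = (coeff 1 a)^2 := by
  rw [pow_two, coeff_mul_range]; simp [Finset.sum_range_succ, h0]; ring
lemma p2_3 : coeff 3 (a^2) = 2 * coeff 1 a * coeff 2 a := by
  rw [pow_two, coeff_mul_range]; simp [Finset.sum_range_succ, h0]; ring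
lemma p2_4 : coeff 4 (a^2) = 2 * coeff 1 a * coeff 3 a + (coeff 2 a)^2 := by
  rw [pow_two, coeff_mul_range]; simp [Finset.sum_range_succ, h0]; ring
lemma p3_3 : coeff 3 (a^3) = (coeff 1 a)^3 := by
  rw [pow_succ, coeff_mul_range]
  simp [Finset.sum_range_succ, h0, p2_0 h0, p2_1 h0, p2_2 h0, p2_3 h0]
  ring
lemma p3_4 : coeff 4 (a^3) = 3 * (coeff 1 a)^2 * coeff 2 a := by
  rw [pow_succ, coeff_mul_range]
  simp [Finset.sum_range_succ, h0, p2_0 h0, p2_1 h0, p2_2 h0, p2_3 h0, p2_4 h0]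
  ring
lemma p3_0 : coeff 0 (a^3) = 0 := by
  rw [pow_succ, coeff_mul_range]; simp [Finset.sum_range_succ, h0]
lemma p3_1 : coeff 1 (a^3) = 0 := by
  rw [pow_succ, coeff_mul_range]; simp [Finset.sum_range_succ, h0, p2_0 h0, p2_1 h0]
lemma p3_2 : coeff 2 (a^3) = 0 := by
  rw [pow_succ, coeff_mul_range]; simp [Finset.sum_range_succ, h0, p2_0 h0, p2_1 h0, p2_2 h0]
lemma p4_4 : coeff 4 (a^4) = (coeff 1 a)^4 := by
  rw [pow_succ, coeff_mul_range]
  simp [Finset.sum_range_succ, h0, p3_0 h0, p3_1 h0, p3_2 h0, p3_3 h0]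
  ring
end powlemmas

section cubelemmas
variable {c : PowerSeries ℚ} (hc0 : coeff 0 c = 1)
include hc0
lemma q2_0 : coeff 0 (c^2) = 1 := by
  rw [pow_two, coeff_mul_range]; simp [Finset.sum_range_succ, hc0]
lemma q2_1 : coeff 1 (c^2) = 2 * coeff 1 c := by
  rw [pow_two, coeff_mul_range]; simp [Finset.sum_range_succ, hc0]; ring
lemma q2_2 : coeff 2 (c^2) = 2 * coeff 2 c + (coeff 1 c)^2 := by
  rw [pow_two, coeff_mul_range]; simp [Finset.sum_range_succ, hc0]; ring
lemma q2_3 : coeff 3 (c^2) = 2 * coeff 3 c + 2 * coeff 1 c * coeff 2 c := by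
  rw [pow_two, coeff_mul_range]; simp [Finset.sum_range_succ, hc0]; ring
lemma q3_0 : coeff 0 (c^3) = 1 := by
  rw [pow_succ, coeff_mul_range]; simp [Finset.sum_range_succ, hc0, q2_0 hc0]
lemma q3_1 : coeff 1 (c^3) = 3 * coeff 1 c := by
  rw [pow_succ, coeff_mul_range]
  simp [Finset.sum_range_succ, hc0, q2_0 hc0, q2_1 hc0]; ring
lemma q3_2 : coeff 2 (c^3) = 3 * coeff 2 c + 3 * (coeff 1 c)^2 := by
  rw [pow_succ, coeff_mul_range]
  simp [Finset.sum_range_succ, hc0, q2_0 hc0, q2_1 hc0, q2_2 hc0]; ring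
lemma q3_3 : coeff 3 (c^3) = 3 * coeff 3 c + 6 * coeff 1 c * coeff 2 c + (coeff 1 c)^3 := by
  rw [pow_succ, coeff_mul_range]
  simp [Finset.sum_range_succ, hc0, q2_0 hc0, q2_1 hc0, q2_2 hc0, q2_3 hc0]; ring
end cubelemmas

lemma gser0 : coeff 0 gser = 0 := by simp [gser]
lemma gser0' : constantCoeff gser = 0 := by
  rw [← coeff_zero_eq_constantCoeff_apply]; exact gser0
lemma gser1 : coeff 1 gser = 6 := by norm_num [gser, Nat.factorial]
lemma gser2 : coeff 2 gser = 45 := by norm_num [gser, Nat.factorial]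
lemma gser3 : coeff 3 gser = 560 := by norm_num [gser, Nat.factorial]

lemma coeff_exp' (n : ℕ) : coeff n (exp ℚ) = 1 / n.factorial := by
  simp [PowerSeries.coeff_exp]

noncomputable abbrev Eser : PowerSeries ℚ := pscomp (PowerSeries.exp ℚ) gser

lemma E0 : coeff 0 Eser = 1 := by
  rw [coeff_pscomp]
  simp [coeff_exp']
lemma E1 : coeff 1 Eser = 6 := by
  rw [coeff_pscomp]
  simp [Finset.sum_range_succ, coeff_exp', gser1, Nat.factorial]
lemma E2 : coeff 2 Eser = 63 := by
  rw [coeff_pscomp]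
  simp [Finset.sum_range_succ, coeff_exp', gser2, p2_2 gser0, gser1, Nat.factorial]
  norm_num
lemma E3 : coeff 3 Eser = 866 := by
  rw [coeff_pscomp]
  simp [Finset.sum_range_succ, coeff_exp', gser3, p2_3 gser0, p3_3 gser0, gser1, gser2,
    Nat.factorial]
  norm_num

lemma fser0 : constantCoeff fser = 0 := by
  simp [fser]
lemma fser0c : coeff 0 fser = 0 := by
  rw [coeff_zero_eq_constantCoeff_apply]; exact fser0
lemma fser1 : coeff 1 fser = -1 := by
  rw [fser, map_neg, coeff_succ_X_mul, E0]
lemma fser2 : coeff 2 fser = -6 := by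
  rw [fser, map_neg, coeff_succ_X_mul, E1]
lemma fser3 : coeff 3 fser = -63 := by
  rw [fser, map_neg, coeff_succ_X_mul, E2]
lemma fser4 : coeff 4 fser = -866 := by
  rw [fser, map_neg, coeff_succ_X_mul, E3]

section ficoeffs
variable {fi : PowerSeries ℚ} (hfi0 : coeff 0 fi = 0) (hR : pscomp fser fi = X)
include hfi0 hR

lemma fib1 : coeff 1 fi = -1 := by
  have e1 := congrArg (coeff 1) hR
  rw [coeff_pscomp] at e1
  simp [Finset.sum_range_succ, fser0c, fser1] at e1
  linarith

lemma fib2 : coeff 2 fi = -6 := by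
  have e2 := congrArg (coeff 2) hR
  rw [coeff_pscomp] at e2
  simp [Finset.sum_range_succ, fser0c, fser1, fser2, p2_2 hfi0, coeff_X] at e2
  rw [fib1 hfi0 hR] at e2
  nlinarith [e2]

lemma fib3 : coeff 3 fi = -9 := by
  have e3 := congrArg (coeff 3) hR
  rw [coeff_pscomp] at e3
  simp [Finset.sum_range_succ, fser0c, fser1, fser2, fser3, p2_3 hfi0, p3_3 hfi0, coeff_X] at e3
  rw [fib1 hfi0 hR, fib2 hfi0 hR] at e3
  nlinarith [e3]

lemma fib4 : coeff 4 fi = -56 := by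
  have e4 := congrArg (coeff 4) hR
  rw [coeff_pscomp] at e4
  simp [Finset.sum_range_succ, fser0c, fser1, fser2, fser3, fser4, p2_4 hfi0, p3_4 hfi0,
    p4_4 hfi0, coeff_X] at e4
  rw [fib1 hfi0 hR, fib2 hfi0 hR, fib3 hfi0 hR] at e4
  nlinarith [e4]

lemma ccoeffs {c : PowerSeries ℚ} (hc0 : coeff 0 c = 1) (hc : fi * c ^ 3 = -X) :
    coeff 1 c = -2 ∧ coeff 2 c = 5 ∧ coeff 3 c = -32 := by
  have f2 := congrArg (coeff 2) hc
  rw [coeff_mul_range] at f2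
  simp [Finset.sum_range_succ, hfi0, q3_0 hc0, q3_1 hc0, q3_2 hc0, coeff_X] at f2
  rw [fib1 hfi0 hR, fib2 hfi0 hR] at f2
  have hc1 : coeff 1 c = -2 := by linarith
  have f3 := congrArg (coeff 3) hc
  rw [coeff_mul_range] at f3
  simp [Finset.sum_range_succ, hfi0, q3_0 hc0, q3_1 hc0, q3_2 hc0, q3_3 hc0, coeff_X] at f3
  rw [fib1 hfi0 hR, fib2 hfi0 hR, fib3 hfi0 hR, hc1] at f3
  have hc2 : coeff 2 c = 5 := by linarith
  have f4 := congrArg (coeff 4) hc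
  rw [coeff_mul_range] at f4
  simp [Finset.sum_range_succ, hfi0, q3_0 hc0, q3_1 hc0, q3_2 hc0, q3_3 hc0, coeff_X] at f4
  rw [fib1 hfi0 hR, fib2 hfi0 hR, fib3 hfi0 hR, fib4 hfi0 hR, hc1, hc2] at f4
  have hc3 : coeff 3 c = -32 := by linarith
  exact ⟨hc1, hc2, hc3⟩
end ficoeffs

/-- `f = −s·exp(g)` has constant coefficient `0` and linear coefficient
`−1`, hence possesses a unique compositional inverse `f⁻¹`; and there is a unique power
series `c` with constant coefficient `1` such that `f⁻¹(Q)·c(Q)³ = −Q`, whose initial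
coefficients are `c = 1 − 2Q + 5Q² − 32Q³ + O(Q⁴)`. -/
theorem stmt14 :
    PowerSeries.constantCoeff fser = 0 ∧
    PowerSeries.coeff 1 fser = -1 ∧
    (∃! fi : PowerSeries ℚ, PowerSeries.constantCoeff fi = 0 ∧
        pscomp fser fi = PowerSeries.X ∧ pscomp fi fser = PowerSeries.X) ∧
    ∀ fi : PowerSeries ℚ, PowerSeries.constantCoeff fi = 0 →
      pscomp fser fi = PowerSeries.X → pscomp fi fser = PowerSeries.X →
        (∃! c : PowerSeries ℚ, PowerSeries.constantCoeff c = 1 ∧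
            fi * c ^ 3 = -PowerSeries.X) ∧
        ∀ c : PowerSeries ℚ, PowerSeries.constantCoeff c = 1 →
          fi * c ^ 3 = -PowerSeries.X →
            PowerSeries.coeff 0 c = 1 ∧ PowerSeries.coeff 1 c = -2 ∧
            PowerSeries.coeff 2 c = 5 ∧ PowerSeries.coeff 3 c = -32 := by
  have hf1 : coeff 1 fser ≠ 0 := by rw [fser1]; norm_num
  refine ⟨fser0, fser1, comp_inv_exists_unique fser0 hf1, ?_⟩
  intro fi h0 hR hL
  have hfi0 : coeff 0 fi = 0 := by rw [coeff_zero_eq_constantCoeff_apply, h0]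
  -- the unit u with fi = -(X * u)
  set u : PowerSeries ℚ := PowerSeries.mk fun n => -(coeff (n+1) fi) with hu
  have hfiXu : fi = -(X * u) := by
    ext n
    cases n with
    | zero =>
      rw [hfi0, map_neg, coeff_zero_eq_constantCoeff_apply, map_mul, constantCoeff_X, zero_mul,
        neg_zero]
    | succ n =>
      rw [map_neg, coeff_succ_X_mul, hu, coeff_mk, neg_neg]
  have hu0 : constantCoeff u = 1 := by
    rw [← coeff_zero_eq_constantCoeff_apply, hu, coeff_mk, fib1 hfi0 hR]
    norm_num
  have hu0' : constantCoeff u ≠ 0 := by rw [hu0]; norm_num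
  have hXne : (X : PowerSeries ℚ) ≠ 0 := X_ne_zero
  have hiff : ∀ c : PowerSeries ℚ, (fi * c ^ 3 = -X) ↔ (c ^ 3 = u⁻¹) := by
    intro c
    rw [PowerSeries.eq_inv_iff_mul_eq_one hu0']
    constructor
    · intro h
      have h1 : X * (u * c ^ 3) = X * 1 := by
        rw [hfiXu] at h
        rw [mul_one]
        linear_combination -h
      have := mul_left_cancel₀ hXne h1
      linear_combination this
    · intro h
      rw [hfiXu]
      have h1 : u * c ^ 3 = 1 := by linear_combination h
      calc -(X * u) * c ^ 3 = -(X * (u * c ^ 3)) := by ring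
        _ = -X := by rw [h1, mul_one]
  have hr1 : constantCoeff (u⁻¹) = 1 := by
    rw [PowerSeries.constantCoeff_inv, hu0]; norm_num
  obtain ⟨c, ⟨hc0, hc3⟩, hcu⟩ := cube_root_exists_unique u⁻¹ hr1
  constructor
  · refine ⟨c, ⟨hc0, (hiff c).mpr hc3⟩, ?_⟩
    rintro y ⟨hy0, hy⟩
    exact hcu y ⟨hy0, (hiff y).mp hy⟩
  · intro c' hc0' hcX
    have hc0'' : coeff 0 c' = 1 := by rw [coeff_zero_eq_constantCoeff_apply, hc0']
    obtain ⟨h1, h2, h3⟩ := ccoeffs hfi0 hR hc0'' hcX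
    exact ⟨hc0'', h1, h2, h3⟩
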